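/- arXiv:math/0608630 — 2 statements merged into one kernel-verified Lean document; each statement's English description precedes it below -/
import Mathlib

section
/- There exists ρ ∈ (0,1) such that for every H ∈ (0,1) and every t ≥ 0, B_H(t) ≤ 1/cosh(ρ·H·(1−H)·t), where B_H(t) = [2(1+H)(e^{Ht} + e^{−Ht}) − (e^{(1+H)t} + e^{−(1+H)t}) + (e^{t/2} − e^{−t/2})^{2H+2}]/(2+4H). -/
/-- The correlation function `B_H` (formula (18)) of the stationary process dual to the
integrated fractional Brownian motion of Hurst index `H`. -/
noncomputable def BH (H t : ℝ) : ℝ :=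
  (2*(1+H)*(Real.exp (H*t) + Real.exp (-H*t))
    - (Real.exp ((1+H)*t) + Real.exp (-(1+H)*t))
    + (Real.exp (t/2) - Real.exp (-t/2)) ^ (2*H+2)) / (2+4*H)

open Real

section Auxiliary
lemma bern_up {x p : ℝ} (hx1 : x ≤ 1) (hp0 : 0 ≤ p) (hp1 : p ≤ 1) :
    (1 - x) ^ p ≤ 1 - p * x := by
  have := rpow_one_add_le_one_add_mul_self (s := -x) (by linarith) hp0 hp1
  simpa [sub_eq_add_neg, mul_neg] using this

lemma bern_lo {x p : ℝ} (hx1 : x ≤ 1) (hp : 1 ≤ p) :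
    1 - p * x ≤ (1 - x) ^ p := by
  have := one_add_mul_self_le_rpow_one_add (s := -x) (by linarith) hp
  simpa [sub_eq_add_neg, mul_neg] using this

/-- if `f 0 = 0`, `f` cont on `[0,1]`, `f' ≥ 0` on `(0,1)` then `f v ≥ 0`. -/
lemma nonneg_on_Icc {f f' : ℝ → ℝ} (hc : ContinuousOn f (Set.Icc 0 1))
    (hd : ∀ w ∈ Set.Ioo (0:ℝ) 1, HasDerivAt f (f' w) w)
    (h0 : f 0 = 0) (hnn : ∀ w ∈ Set.Ioo (0:ℝ) 1, 0 ≤ f' w)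
    {v : ℝ} (hv0 : 0 ≤ v) (hv1 : v ≤ 1) : 0 ≤ f v := by
  have hmono : MonotoneOn f (Set.Icc 0 1) := by
    apply monotoneOn_of_deriv_nonneg (convex_Icc 0 1) hc
    · intro w hw
      rw [interior_Icc] at hw
      exact ((hd w hw).differentiableAt).differentiableWithinAt
    · intro w hw
      rw [interior_Icc] at hw
      rw [(hd w hw).deriv]
      exact hnn w hw
  have := hmono (Set.mem_Icc.2 ⟨le_refl 0, zero_le_one⟩) (Set.mem_Icc.2 ⟨hv0, hv1⟩) hv0
  linarith [h0 ▸ this]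

lemma hasDerivAt_one_sub_rpow {p : ℝ} {w : ℝ} (hw : w < 1) :
    HasDerivAt (fun x : ℝ => (1-x)^p) (-(p * (1-w)^(p-1))) w := by
  have h1 : HasDerivAt (fun x : ℝ => 1 - x) (-1) w := (hasDerivAt_id w).const_sub 1
  have h2 : HasDerivAt (fun y : ℝ => y ^ p) (p * (1-w)^(p-1)) (1-w) :=
    Real.hasDerivAt_rpow_const (Or.inl (by linarith : (1:ℝ)-w ≠ 0))
  have := h2.comp w h1
  exact this.congr_deriv (by ring)

lemma cont_one_sub_rpow {p : ℝ} (hp : 0 ≤ p) :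
    ContinuousOn (fun x : ℝ => (1-x)^p) (Set.Icc 0 1) := by
  apply ContinuousOn.rpow_const (by fun_prop)
  intro x _; right; exact hp

/-- key inverse-Bernoulli: `(1-w)^(p-1) ≥ 1+(1-p)w` for `0≤p≤1`, `0≤w<1`. -/
lemma inv_bern {p w : ℝ} (hp0 : 0 ≤ p) (hp1 : p ≤ 1) (hw0 : 0 ≤ w) (hw1 : w < 1) :
    1 + (1-p)*w ≤ (1-w)^(p-1) := by
  have hb : (1-w)^(1-p) ≤ 1 - (1-p)*w := bern_up hw1.le (by linarith) (by linarith)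
  have hposl : 0 < (1-w)^(1-p) := rpow_pos_of_pos (by linarith) _
  have hpos : 0 < 1 - (1-p)*w := by nlinarith
  have he : (1-w)^(p-1) = ((1-w)^(1-p))⁻¹ := by
    rw [show p-1 = -(1-p) by ring, rpow_neg (by linarith : (0:ℝ) ≤ 1-w)]
  rw [he]
  calc 1 + (1-p)*w ≤ 1/(1 - (1-p)*w) := by
        rw [le_div_iff₀ hpos]; nlinarith [sq_nonneg ((1-p)*w)]
    _ ≤ 1/((1-w)^(1-p)) := one_div_le_one_div_of_le hposl hb
    _ = ((1-w)^(1-p))⁻¹ := one_div _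

lemma quad_concave_up {p : ℝ} (hp0 : 0 ≤ p) (hp1 : p ≤ 1) {v : ℝ} (hv0 : 0 ≤ v) (hv1 : v ≤ 1) :
    (1 - v) ^ p ≤ 1 - p * v - (p * (1 - p) / 2) * v ^ 2 := by
  have := nonneg_on_Icc (f := fun w => 1 - p * w - (p*(1-p)/2) * w^2 - (1-w)^p)
    (f' := fun w => -p - (p*(1-p)/2)*(2*w) + (p * (1-w)^(p-1)))
    (by apply ContinuousOn.sub (by fun_prop) (cont_one_sub_rpow hp0))
    (fun w hw => by
      have h := hasDerivAt_one_sub_rpow (p := p) hw.2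
      have hpoly : HasDerivAt (fun w : ℝ => 1 - p * w - (p*(1-p)/2) * w^2)
          (-p - (p*(1-p)/2)*(2*w)) w := by
        have : HasDerivAt (fun w : ℝ => 1 - p * w - (p*(1-p)/2) * w^2)
            (0 - p * 1 - (p*(1-p)/2) * (2 * w^1)) w := by
          exact (((hasDerivAt_const w (1:ℝ)).sub ((hasDerivAt_id w).const_mul p)).sub
            (((hasDerivAt_pow 2 w)).const_mul (p*(1-p)/2)))
        convert this using 1; ring
      have := hpoly.sub h
      exact this.congr_deriv (by ring))
    (by norm_num)
    (fun w hw => by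
      have := inv_bern hp0 hp1 hw.1.le hw.2
      have h2 : p * (1 + (1-p)*w) ≤ p * (1-w)^(p-1) := by
        apply mul_le_mul_of_nonneg_left this hp0
      nlinarith)
    hv0 hv1
  linarith [this]

lemma quad_convex_lo {p : ℝ} (hp1 : 1 ≤ p) (hp2 : p ≤ 2) {v : ℝ} (hv0 : 0 ≤ v) (hv1 : v ≤ 1) :
    1 - p * v + (p * (p - 1) / 2) * v ^ 2 ≤ (1 - v) ^ p := by
  have := nonneg_on_Icc (f := fun w => (1-w)^p - (1 - p * w + (p*(p-1)/2) * w^2))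
    (f' := fun w => -(p * (1-w)^(p-1)) - (-p + (p*(p-1)/2)*(2*w)))
    (by apply ContinuousOn.sub (cont_one_sub_rpow (by linarith)) (by fun_prop))
    (fun w hw => by
      have h := hasDerivAt_one_sub_rpow (p := p) hw.2
      have hpoly : HasDerivAt (fun w : ℝ => 1 - p * w + (p*(p-1)/2) * w^2)
          (-p + (p*(p-1)/2)*(2*w)) w := by
        have : HasDerivAt (fun w : ℝ => 1 - p * w + (p*(p-1)/2) * w^2)
            (0 - p * 1 + (p*(p-1)/2) * (2 * w^1)) w :=
          (((hasDerivAt_const w (1:ℝ)).sub ((hasDerivAt_id w).const_mul p)).add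
            (((hasDerivAt_pow 2 w)).const_mul (p*(p-1)/2)))
        convert this using 1; ring
      exact h.sub hpoly)
    (by norm_num)
    (fun w hw => by
      have hb : (1-w)^(p-1) ≤ 1 - (p-1)*w := bern_up hw.2.le (by linarith) (by linarith)
      have h2 : p * (1-w)^(p-1) ≤ p * (1 - (p-1)*w) :=
        mul_le_mul_of_nonneg_left hb (by linarith)
      nlinarith)
    hv0 hv1
  linarith [this]

lemma quad_23_up {p : ℝ} (hp1 : 2 ≤ p) (hp2 : p ≤ 3) {v : ℝ} (hv0 : 0 ≤ v) (hv1 : v ≤ 1) :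
    (1 - v) ^ p ≤ 1 - p * v + (p * (p - 1) / 2) * v ^ 2 := by
  have := nonneg_on_Icc (f := fun w => (1 - p * w + (p*(p-1)/2) * w^2) - (1-w)^p)
    (f' := fun w => (-p + (p*(p-1)/2)*(2*w)) - (-(p * (1-w)^(p-1))))
    (by apply ContinuousOn.sub (by fun_prop) (cont_one_sub_rpow (by linarith)))
    (fun w hw => by
      have h := hasDerivAt_one_sub_rpow (p := p) hw.2
      have hpoly : HasDerivAt (fun w : ℝ => 1 - p * w + (p*(p-1)/2) * w^2)
          (-p + (p*(p-1)/2)*(2*w)) w := by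
        have : HasDerivAt (fun w : ℝ => 1 - p * w + (p*(p-1)/2) * w^2)
            (0 - p * 1 + (p*(p-1)/2) * (2 * w^1)) w :=
          (((hasDerivAt_const w (1:ℝ)).sub ((hasDerivAt_id w).const_mul p)).add
            (((hasDerivAt_pow 2 w)).const_mul (p*(p-1)/2)))
        convert this using 1; ring
      exact hpoly.sub h)
    (by norm_num)
    (fun w hw => by
      have hb : 1 - (p-1)*w ≤ (1-w)^(p-1) := bern_lo hw.2.le (by linarith)
      have h2 : p * (1 - (p-1)*w) ≤ p * (1-w)^(p-1) :=
        mul_le_mul_of_nonneg_left hb (by linarith)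
      nlinarith)
    hv0 hv1
  linarith [this]

lemma sinh_le_mul_cosh {y : ℝ} (hy : 0 ≤ y) : Real.sinh y ≤ y * Real.cosh y := by
  rcases eq_or_lt_of_le hy with rfl | hy'
  · simp
  have hmono : MonotoneOn (fun x => x * Real.cosh x - Real.sinh x) (Set.Icc 0 y) := by
    apply monotoneOn_of_deriv_nonneg (convex_Icc 0 y) (by fun_prop)
    · intro w _
      exact ((((hasDerivAt_id' w).mul (Real.hasDerivAt_cosh w)).sub
        (Real.hasDerivAt_sinh w)).differentiableAt).differentiableWithinAt
    · intro w hw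
      rw [interior_Icc] at hw
      have hd : HasDerivAt (fun x => x * Real.cosh x - Real.sinh x) (1 * Real.cosh w + w * Real.sinh w - Real.cosh w) w := ((hasDerivAt_id' w).mul (Real.hasDerivAt_cosh w)).sub (Real.hasDerivAt_sinh w)
      rw [hd.deriv]
      have : 0 ≤ w * Real.sinh w := mul_nonneg hw.1.le (Real.sinh_nonneg_iff.2 hw.1.le)
      nlinarith
  have := hmono (Set.mem_Icc.2 ⟨le_refl 0, hy⟩) (Set.mem_Icc.2 ⟨hy, le_refl y⟩) hy
  simp at this
  linarith

/-- `1 - x^2/2 ≤ 1/cosh x` for `x ≥ 0`. -/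
lemma sech_ge_quad {x : ℝ} (hx : 0 ≤ x) : 1 - x^2/2 ≤ 1 / Real.cosh x := by
  have hc := Real.cosh_pos x
  rcases le_or_gt (1 - x^2/2) 0 with h | h
  · exact h.trans (by positivity)
  rw [le_div_iff₀ hc]
  have hid : Real.cosh x = 2 * Real.cosh (x/2)^2 - 1 := by
    have := Real.cosh_two_mul (x/2)
    have h2 : Real.cosh (x/2)^2 = Real.sinh (x/2)^2 + 1 := Real.cosh_sq _
    rw [show 2*(x/2) = x by ring] at this
    nlinarith [this]
  have hs : Real.sinh (x/2) ≤ (x/2) * Real.cosh (x/2) := sinh_le_mul_cosh (by linarith)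
  have hs0 : 0 ≤ Real.sinh (x/2) := Real.sinh_nonneg_iff.2 (by linarith)
  have hsq : Real.sinh (x/2)^2 ≤ (x/2)^2 * Real.cosh (x/2)^2 := by
    have := mul_le_mul hs hs hs0 (by positivity)
    calc Real.sinh (x/2)^2 = Real.sinh (x/2) * Real.sinh (x/2) := sq _
      _ ≤ ((x/2) * Real.cosh (x/2)) * ((x/2) * Real.cosh (x/2)) := this
      _ = (x/2)^2 * Real.cosh (x/2)^2 := by ring
  have h2 : Real.cosh (x/2)^2 = Real.sinh (x/2)^2 + 1 := Real.cosh_sq _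
  nlinarith [sq_nonneg (Real.sinh (x/2)), sq_nonneg x, sq_nonneg (x * Real.sinh (x/2))]

/-- `exp (-x) ≤ 1/cosh x` for `x ≥ 0`. -/
lemma sech_ge_exp {x : ℝ} (hx : 0 ≤ x) : Real.exp (-x) ≤ 1 / Real.cosh x := by
  have hc := Real.cosh_pos x
  rw [le_div_iff₀ hc, Real.cosh_eq]
  have h1 : Real.exp (-x) * Real.exp x = 1 := by
    rw [← Real.exp_add]; simp
  have h2 : Real.exp (-x) ≤ 1 := Real.exp_le_one_iff.2 (by linarith)
  nlinarith [Real.exp_pos (-x), Real.exp_pos x]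

lemma exp_rpow' (x p : ℝ) : (Real.exp x) ^ p = Real.exp (x * p) := by
  rw [rpow_def_of_pos (exp_pos x), log_exp]

/-- numerator of BH in terms of `u = exp (-t)`. -/
lemma BH_eq {H t : ℝ} (ht : 0 ≤ t) (hH : 0 ≤ H) :
    BH H t = (2*(1+H)*((Real.exp (-t))^H + (Real.exp (-t))^(-H))
      - ((Real.exp (-t))^(1+H) + (Real.exp (-t))^(-(1+H)))
      + (Real.exp (-t))^(-(1+H)) * (1 - Real.exp (-t))^(2*H+2)) / (2+4*H) := by
  have hu1 : Real.exp (-t) ≤ 1 := exp_le_one_iff.2 (by linarith)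
  have hbase : Real.exp (t/2) - Real.exp (-t/2) = Real.exp (t/2) * (1 - Real.exp (-t)) := by
    rw [mul_sub, mul_one, ← Real.exp_add]; ring_nf
  have hsin : (Real.exp (t/2) - Real.exp (-t/2)) ^ (2*H+2)
      = (Real.exp (-t))^(-(1+H)) * (1 - Real.exp (-t))^(2*H+2) := by
    rw [hbase, Real.mul_rpow (exp_pos _).le (by linarith), exp_rpow', exp_rpow']
    congr 2
    ring
  unfold BH
  rw [hsin, exp_rpow', exp_rpow', exp_rpow', exp_rpow']
  ring_nf

lemma polyA {H v : ℝ} (hH0 : 0 ≤ H) (hH1 : H ≤ 1) :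
    2*(1+H)*(1 - H*v - (H*(1-H)/2)*v^2)
      - (1 - (1+H)*v + ((1+H)*((1+H)-1)/2)*v^2)
      + (1+4*H)*(1 - (1-H)*v - ((1-H)*(1-(1-H))/2)*v^2)
      - 2*H*(1 - (2-H)*v + ((2-H)*((2-H)-1)/2)*v^2)
      ≤ (2+4*H) - (1+2*H)*H*(1-H)*v^2 := by
  nlinarith [mul_nonneg (mul_nonneg hH0 (by linarith : (0:ℝ) ≤ 3-2*H)) (sq_nonneg v)]

lemma polyB {H v : ℝ} (hH0 : 0 ≤ H) (hH1 : H ≤ 1) :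
    2*(1+H)*(1 - H*v - (H*(1-H)/2)*v^2)
      - (1 - (1+H)*v + ((1+H)*((1+H)-1)/2)*v^2)
      + 6*H*(1 - (1-H)*v - ((1-H)*(1-(1-H))/2)*v^2)
      - (6*H-2)*(1 - (2-H)*v + ((2-H)*((2-H)-1)/2)*v^2)
      + (2*H-1)*(1 - (3-H)*v + ((3-H)*((3-H)-1)/2)*v^2)
      ≤ (2+4*H) - (1+2*H)*H*(1-H)*v^2 := by
  nlinarith [mul_nonneg (mul_nonneg (by linarith : (0:ℝ) ≤ 1-H) (by linarith : (0:ℝ) ≤ 1+2*H)) (sq_nonneg v)]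


lemma fA_bound {H u : ℝ} (hH0 : 0 < H) (hc : H ≤ 1/2) (hu0 : 0 < u) (hu1 : u ≤ 1) :
    2*(1+H)*(u^H + u^(-H)) - (u^(1+H) + u^(-(1+H))) + u^(-(1+H)) * (1-u)^(2*H+2)
      ≤ 2*(1+H)*u^H - u^(1+H) + (1+4*H)*u^(1-H) - 2*H*u^(2-H) := by
  have hv0 : (0:ℝ) ≤ 1 - u := by linarith
  have e1 : u^(-(1+H)) * u = u^(-H) := by
    rw [← Real.rpow_add_one (ne_of_gt hu0)]; congr 1; ring
  have e2 : u^(-(1+H)) * u^2 = u^(1-H) := by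
    rw [show u^2 = u^((2:ℕ):ℝ) by rw [rpow_natCast], ← Real.rpow_add hu0]
    congr 1; push_cast; ring
  have e3 : u^(-(1+H)) * u^3 = u^(2-H) := by
    rw [show u^3 = u^((3:ℕ):ℝ) by rw [rpow_natCast], ← Real.rpow_add hu0]
    congr 1; push_cast; ring
  have hamm : (0:ℝ) < u^(-(1+H)) := rpow_pos_of_pos hu0 _
  have s1 : (1-u)^(2*H) ≤ 1-2*H*u := by
    have := bern_up (x := u) (p := 2*H) hu1 (by linarith) (by linarith)
    linarith [this]
  have s2 : (1-u)^(2*H+2) = (1-u)^(2*H) * (1-u)^2 := by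
    have hexp : 2*H+2 = 2*H + ((2:ℕ):ℝ) := by push_cast; ring
    rw [hexp, Real.rpow_add' hv0 (by push_cast; intro hh; linarith), Real.rpow_natCast]
  have s3 : u^(-(1+H)) * (1-u)^(2*H+2) ≤ u^(-(1+H)) * ((1-2*H*u) * (1-u)^2) := by
    apply mul_le_mul_of_nonneg_left _ hamm.le
    rw [s2]
    exact mul_le_mul_of_nonneg_right s1 (sq_nonneg _)
  have s4 : u^(-(1+H)) * ((1-2*H*u) * (1-u)^2)
      = u^(-(1+H)) - (2+2*H)*u^(-H) + (1+4*H)*u^(1-H) - 2*H*u^(2-H) := by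
    rw [← e1, ← e2, ← e3]; ring
  rw [s4] at s3; linarith

lemma fB_bound {H u : ℝ} (hc : 1/2 ≤ H) (hH1 : H < 1) (hu0 : 0 < u) (hu1 : u ≤ 1) :
    2*(1+H)*(u^H + u^(-H)) - (u^(1+H) + u^(-(1+H))) + u^(-(1+H)) * (1-u)^(2*H+2)
      ≤ 2*(1+H)*u^H - u^(1+H) + 6*H*u^(1-H) - (6*H-2)*u^(2-H) + (2*H-1)*u^(3-H) := by
  have hv0 : (0:ℝ) ≤ 1 - u := by linarith
  have e1 : u^(-(1+H)) * u = u^(-H) := by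
    rw [← Real.rpow_add_one (ne_of_gt hu0)]; congr 1; ring
  have e2 : u^(-(1+H)) * u^2 = u^(1-H) := by
    rw [show u^2 = u^((2:ℕ):ℝ) by rw [rpow_natCast], ← Real.rpow_add hu0]
    congr 1; push_cast; ring
  have e3 : u^(-(1+H)) * u^3 = u^(2-H) := by
    rw [show u^3 = u^((3:ℕ):ℝ) by rw [rpow_natCast], ← Real.rpow_add hu0]
    congr 1; push_cast; ring
  have e4 : u^(-(1+H)) * u^4 = u^(3-H) := by
    rw [show u^4 = u^((4:ℕ):ℝ) by rw [rpow_natCast], ← Real.rpow_add hu0]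
    congr 1; push_cast; ring
  have hamm : (0:ℝ) < u^(-(1+H)) := rpow_pos_of_pos hu0 _
  have s1 : (1-u)^(2*H-1) ≤ 1-(2*H-1)*u := by
    have := bern_up (x := u) (p := 2*H-1) hu1 (by linarith) (by linarith)
    linarith [this]
  have s2 : (1-u)^(2*H+2) = (1-u)^(2*H-1) * (1-u)^3 := by
    have hexp : 2*H+2 = (2*H-1) + ((3:ℕ):ℝ) := by push_cast; ring
    rw [hexp, Real.rpow_add' hv0 (by push_cast; intro hh; linarith), Real.rpow_natCast]
  have h3nn : (0:ℝ) ≤ (1-u)^3 := by positivity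
  have s3 : u^(-(1+H)) * (1-u)^(2*H+2) ≤ u^(-(1+H)) * ((1-(2*H-1)*u) * (1-u)^3) := by
    apply mul_le_mul_of_nonneg_left _ hamm.le
    rw [s2]
    exact mul_le_mul_of_nonneg_right s1 h3nn
  have s4 : u^(-(1+H)) * ((1-(2*H-1)*u) * (1-u)^3)
      = u^(-(1+H)) - (2+2*H)*u^(-H) + 6*H*u^(1-H) - (6*H-2)*u^(2-H) + (2*H-1)*u^(3-H) := by
    rw [← e1, ← e2, ← e3, ← e4]; ring
  rw [s4] at s3; linarith

set_option maxHeartbeats 1000000 in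
lemma lem1 {H u : ℝ} (hH0 : 0 < H) (hH1 : H < 1) (hu0 : 0 < u) (hu1 : u ≤ 1) :
    2*(1+H)*(u^H + u^(-H)) - (u^(1+H) + u^(-(1+H))) + u^(-(1+H)) * (1-u)^(2*H+2)
      ≤ (2+4*H) - (1+2*H)*H*(1-H)*(1-u)^2 := by
  have hv0 : (0:ℝ) ≤ 1 - u := by linarith
  have hv1 : 1 - u ≤ 1 := by linarith
  have huv : 1 - (1-u) = u := by ring
  have q1 : u^H ≤ 1 - H*(1-u) - (H*(1-H)/2)*(1-u)^2 := by
    have := quad_concave_up hH0.le hH1.le hv0 hv1; rwa [huv] at this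
  have q3 : u^(1-H) ≤ 1 - (1-H)*(1-u) - ((1-H)*(1-(1-H))/2)*(1-u)^2 := by
    have := quad_concave_up (p := 1-H) (by linarith) (by linarith) hv0 hv1
    rwa [huv] at this
  have q2 : 1 - (1+H)*(1-u) + ((1+H)*((1+H)-1)/2)*(1-u)^2 ≤ u^(1+H) := by
    have := quad_convex_lo (p := 1+H) (by linarith) (by linarith) hv0 hv1
    rwa [huv] at this
  have q4 : 1 - (2-H)*(1-u) + ((2-H)*((2-H)-1)/2)*(1-u)^2 ≤ u^(2-H) := by
    have := quad_convex_lo (p := 2-H) (by linarith) (by linarith) hv0 hv1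
    rwa [huv] at this
  rcases le_total H (1/2) with hc | hc
  · have key := fA_bound hH0 hc hu0 hu1
    have m1 : 2*(1+H)*u^H ≤ 2*(1+H)*(1 - H*(1-u) - (H*(1-H)/2)*(1-u)^2) :=
      mul_le_mul_of_nonneg_left q1 (by linarith)
    have m3 : (1+4*H)*u^(1-H) ≤ (1+4*H)*(1 - (1-H)*(1-u) - ((1-H)*(1-(1-H))/2)*(1-u)^2) :=
      mul_le_mul_of_nonneg_left q3 (by linarith)
    have m4 : 2*H*(1 - (2-H)*(1-u) + ((2-H)*((2-H)-1)/2)*(1-u)^2) ≤ 2*H*u^(2-H) :=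
      mul_le_mul_of_nonneg_left q4 (by linarith)
    have step2 : 2*(1+H)*u^H - u^(1+H) + (1+4*H)*u^(1-H) - 2*H*u^(2-H)
        ≤ 2*(1+H)*(1 - H*(1-u) - (H*(1-H)/2)*(1-u)^2)
          - (1 - (1+H)*(1-u) + ((1+H)*((1+H)-1)/2)*(1-u)^2)
          + (1+4*H)*(1 - (1-H)*(1-u) - ((1-H)*(1-(1-H))/2)*(1-u)^2)
          - 2*H*(1 - (2-H)*(1-u) + ((2-H)*((2-H)-1)/2)*(1-u)^2) :=
      sub_le_sub (add_le_add (sub_le_sub m1 q2) m3) m4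
    exact le_trans key (le_trans step2 (polyA hH0.le hH1.le))
  · have key := fB_bound hc hH1 hu0 hu1
    have q5 : u^(3-H) ≤ 1 - (3-H)*(1-u) + ((3-H)*((3-H)-1)/2)*(1-u)^2 := by
      have := quad_23_up (p := 3-H) (by linarith) (by linarith) hv0 hv1
      rwa [huv] at this
    have m1 : 2*(1+H)*u^H ≤ 2*(1+H)*(1 - H*(1-u) - (H*(1-H)/2)*(1-u)^2) :=
      mul_le_mul_of_nonneg_left q1 (by linarith)
    have m3 : 6*H*u^(1-H) ≤ 6*H*(1 - (1-H)*(1-u) - ((1-H)*(1-(1-H))/2)*(1-u)^2) :=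
      mul_le_mul_of_nonneg_left q3 (by linarith)
    have m4 : (6*H-2)*(1 - (2-H)*(1-u) + ((2-H)*((2-H)-1)/2)*(1-u)^2) ≤ (6*H-2)*u^(2-H) :=
      mul_le_mul_of_nonneg_left q4 (by linarith)
    have m5 : (2*H-1)*u^(3-H) ≤ (2*H-1)*(1 - (3-H)*(1-u) + ((3-H)*((3-H)-1)/2)*(1-u)^2) :=
      mul_le_mul_of_nonneg_left q5 (by linarith)
    have step2 : 2*(1+H)*u^H - u^(1+H) + 6*H*u^(1-H) - (6*H-2)*u^(2-H) + (2*H-1)*u^(3-H)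
        ≤ 2*(1+H)*(1 - H*(1-u) - (H*(1-H)/2)*(1-u)^2)
          - (1 - (1+H)*(1-u) + ((1+H)*((1+H)-1)/2)*(1-u)^2)
          + 6*H*(1 - (1-H)*(1-u) - ((1-H)*(1-(1-H))/2)*(1-u)^2)
          - (6*H-2)*(1 - (2-H)*(1-u) + ((2-H)*((2-H)-1)/2)*(1-u)^2)
          + (2*H-1)*(1 - (3-H)*(1-u) + ((3-H)*((3-H)-1)/2)*(1-u)^2) :=
      add_le_add (sub_le_sub (add_le_add (sub_le_sub m1 q2) m3) m4) m5
    exact le_trans key (le_trans step2 (polyB hH0.le hH1.le))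

lemma exp_ge_7 : (7:ℝ) ≤ Real.exp (5/2) := by
  have h1 : (2.7:ℝ) ≤ Real.exp 1 := by
    have := Real.exp_one_gt_d9; linarith
  have h2 : Real.exp (5/2) = Real.exp 1 * Real.exp 1 * Real.exp (1/2) := by
    rw [← Real.exp_add, ← Real.exp_add]; norm_num
  have h3 : (1.5:ℝ) ≤ Real.exp (1/2) := by
    have := Real.add_one_le_exp (1/2:ℝ); linarith
  have h4 : (0:ℝ) < Real.exp 1 := Real.exp_pos 1
  rw [h2]; nlinarith

lemma exp_t4 {t : ℝ} (ht : 10 ≤ t) : 2 + t/2 ≤ Real.exp (t/4) := by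
  have h1 : Real.exp (t/4) = Real.exp (5/2) * Real.exp ((t-10)/4) := by
    rw [← Real.exp_add]; ring_nf
  have h2 : 1 + (t-10)/4 ≤ Real.exp ((t-10)/4) := by
    have := Real.add_one_le_exp ((t-10)/4); linarith
  have h3 := exp_ge_7
  have h4 : (0:ℝ) < 1 + (t-10)/4 := by linarith
  nlinarith [Real.exp_pos ((t-10)/4)]

lemma exp_ge_55 : (55:ℝ) ≤ Real.exp (110/24) := by
  have h1 : (2.7:ℝ) ≤ Real.exp 1 := by
    have := Real.exp_one_gt_d9; linarith
  have h2 : Real.exp (110/24) = Real.exp 1 * Real.exp 1 * Real.exp 1 * Real.exp 1 * Real.exp (7/12) := by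
    rw [← Real.exp_add, ← Real.exp_add, ← Real.exp_add, ← Real.exp_add]; norm_num
  have h3 : (1.5:ℝ) ≤ Real.exp (7/12) := by
    have := Real.add_one_le_exp (7/12:ℝ); linarith
  have h4 : (0:ℝ) < Real.exp 1 := Real.exp_pos 1
  have ha2 : (7.29:ℝ) ≤ Real.exp 1 * Real.exp 1 := by nlinarith
  have ha4 : (53.14:ℝ) ≤ Real.exp 1 * Real.exp 1 * (Real.exp 1 * Real.exp 1) := by nlinarith
  rw [h2]; nlinarith

lemma exp_1124 {t : ℝ} (ht : 10 ≤ t) : (11/2)*t ≤ Real.exp (11*t/24) := by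
  have h1 : Real.exp (11*t/24) = Real.exp (110/24) * Real.exp (11*(t-10)/24) := by
    rw [← Real.exp_add]; ring_nf
  have h2 : 1 + 11*(t-10)/24 ≤ Real.exp (11*(t-10)/24) := by
    have := Real.add_one_le_exp (11*(t-10)/24); linarith
  have h3 := exp_ge_55
  nlinarith [Real.exp_pos (11*(t-10)/24)]

lemma polyt {H t : ℝ} (hH0 : 0 ≤ H) (ht0 : 0 ≤ t) :
    2*(1+H)*(1+t/4) + H*(2+t)*(1+H*t/2) ≤ (2+4*H)*((1+H*t/2)*(1+t/4)) := by
  nlinarith [mul_nonneg hH0 ht0, mul_nonneg (mul_nonneg hH0 ht0) ht0,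
    mul_nonneg (mul_nonneg hH0 hH0) ht0]

/-- Case A of the tail bound: `2(1+H)a1 - a2 + (1+4H)a3 - 2H a4 ≤ (2+4H) exp(-ct)`. -/
lemma lem2A {H t : ℝ} (hH0 : 0 < H) (hH1 : H ≤ 1/2) (ht : 10 ≤ t) :
    2*(1+H)*Real.exp (-(H*t)) - Real.exp (-((1+H)*t)) + (1+4*H)*Real.exp (-((1-H)*t))
      - 2*H*Real.exp (-((2-H)*t))
      ≤ (2+4*H) * Real.exp (-(H*(1-H)/6*t)) := by
  have ht0 : (0:ℝ) ≤ t := by linarith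
  set c : ℝ := H*(1-H)/6 with hc
  have hc0 : 0 ≤ c := by nlinarith
  have hcH : c ≤ H/2 := by nlinarith
  have hc24 : c ≤ 1/24 := by nlinarith
  -- step 1: -a2 + (1+4H) a3 ≤ 2H(2+t) a3
  have hk : -Real.exp (-((1+H)*t)) + (1+4*H)*Real.exp (-((1-H)*t))
      ≤ 2*H*(2+t)*Real.exp (-((1-H)*t)) := by
    have e1 : Real.exp (-((1+H)*t)) = Real.exp (-((1-H)*t)) * Real.exp (-(2*H*t)) := by
      rw [← Real.exp_add]; ring_nf
    have e2 : 1 - 2*H*t ≤ Real.exp (-(2*H*t)) := by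
      have := Real.add_one_le_exp (-(2*H*t)); linarith
    have e3 : (0:ℝ) < Real.exp (-((1-H)*t)) := Real.exp_pos _
    rw [e1]
    nlinarith [e3.le, mul_le_mul_of_nonneg_left e2 e3.le]
  -- step 2: reduce to `2(1+H) A + 2H(2+t) B ≤ 2+4H` after dividing by exp(-ct)
  have hEc : (0:ℝ) < Real.exp (-(c*t)) := Real.exp_pos _
  have ea1 : Real.exp (-(H*t)) = Real.exp (-((H-c)*t)) * Real.exp (-(c*t)) := by
    rw [← Real.exp_add]; ring_nf
  have ea3 : Real.exp (-((1-H)*t)) = Real.exp (-((1-H-c)*t)) * Real.exp (-(c*t)) := by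
    rw [← Real.exp_add]; ring_nf
  set A : ℝ := Real.exp (-((H-c)*t)) with hA
  set B : ℝ := Real.exp (-((1-H-c)*t)) with hB
  have hApos : 0 < A := Real.exp_pos _
  have hBpos : 0 < B := Real.exp_pos _
  -- A*(1+Ht/2) ≤ 1
  have hAb : A * (1 + H*t/2) ≤ 1 := by
    have h1 : A ≤ Real.exp (-(H*t/2)) := by
      apply Real.exp_le_exp.2; nlinarith
    have h2 : 1 + H*t/2 ≤ Real.exp (H*t/2) := by
      have := Real.add_one_le_exp (H*t/2); linarith
    have h3 : Real.exp (-(H*t/2)) * Real.exp (H*t/2) = 1 := by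
      rw [← Real.exp_add]; simp
    have h4 : (0:ℝ) < Real.exp (-(H*t/2)) := Real.exp_pos _
    calc A * (1 + H*t/2) ≤ Real.exp (-(H*t/2)) * (1 + H*t/2) := by
          apply mul_le_mul_of_nonneg_right h1 (by nlinarith)
      _ ≤ Real.exp (-(H*t/2)) * Real.exp (H*t/2) := by
          apply mul_le_mul_of_nonneg_left h2 h4.le
      _ = 1 := h3
  -- B*(2+t/2) ≤ 1
  have hBb : B * (2 + t/2) ≤ 1 := by
    have h1 : B ≤ Real.exp (-(t/4)) := by
      apply Real.exp_le_exp.2; nlinarith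
    have h2 := exp_t4 ht
    have h3 : Real.exp (-(t/4)) * Real.exp (t/4) = 1 := by
      rw [← Real.exp_add]; simp
    have h4 : (0:ℝ) < Real.exp (-(t/4)) := Real.exp_pos _
    calc B * (2 + t/2) ≤ Real.exp (-(t/4)) * (2 + t/2) := by
          apply mul_le_mul_of_nonneg_right h1 (by linarith)
      _ ≤ Real.exp (-(t/4)) * Real.exp (t/4) := by
          apply mul_le_mul_of_nonneg_left h2 h4.le
      _ = 1 := h3
  -- the core polynomial step
  have core : 2*(1+H)*A + 2*H*(2+t)*B ≤ 2+4*H := by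
    have hP : (0:ℝ) < 1 + H*t/2 := by nlinarith
    have hD : (0:ℝ) < 1 + t/4 := by linarith
    have hnn1 : (0:ℝ) ≤ 2*(1+H)*(1+t/4) := by nlinarith
    have hnn2 : (0:ℝ) ≤ H*(2+t)*(1+H*t/2) := by
      have := mul_nonneg (mul_nonneg hH0.le (by linarith : (0:ℝ) ≤ 2+t)) hP.le
      linarith [this]
    have x1 : (2*(1+H)*(1+t/4)) * (A * (1 + H*t/2)) ≤ 2*(1+H)*(1+t/4) := by
      simpa using mul_le_mul_of_nonneg_left hAb hnn1
    have x2 : (H*(2+t)*(1+H*t/2)) * (B * (2 + t/2)) ≤ H*(2+t)*(1+H*t/2) := by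
      simpa using mul_le_mul_of_nonneg_left hBb hnn2
    have poly := polyt hH0.le ht0
    have expand : (2*(1+H)*A + 2*H*(2+t)*B) * ((1+H*t/2)*(1+t/4))
        = (2*(1+H)*(1+t/4)) * (A * (1 + H*t/2)) + (H*(2+t)*(1+H*t/2)) * (B * (2 + t/2)) := by
      ring
    have final : (2*(1+H)*A + 2*H*(2+t)*B) * ((1+H*t/2)*(1+t/4))
        ≤ (2+4*H) * ((1+H*t/2)*(1+t/4)) := by
      rw [expand]; linarith
    exact le_of_mul_le_mul_right final (by positivity)
  -- assemble
  have hdrop : (0:ℝ) ≤ 2*H*Real.exp (-((2-H)*t)) := by positivity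
  calc 2*(1+H)*Real.exp (-(H*t)) - Real.exp (-((1+H)*t)) + (1+4*H)*Real.exp (-((1-H)*t))
        - 2*H*Real.exp (-((2-H)*t))
      ≤ 2*(1+H)*Real.exp (-(H*t)) + 2*H*(2+t)*Real.exp (-((1-H)*t)) := by linarith
    _ = (2*(1+H)*A + 2*H*(2+t)*B) * Real.exp (-(c*t)) := by
        rw [ea1, ea3]; ring
    _ ≤ (2+4*H) * Real.exp (-(c*t)) := by
        apply mul_le_mul_of_nonneg_right core hEc.le

lemma w2aux {H : ℝ} : (6*H-2)*(2-2*H) ≤ 8*(1-H) := by nlinarith [sq_nonneg (1-H)]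

set_option maxHeartbeats 1000000 in
lemma lem2B {H t : ℝ} (hH0 : 1/2 ≤ H) (hH1 : H < 1) (ht : 10 ≤ t) :
    2*(1+H)*Real.exp (-(H*t)) - Real.exp (-((1+H)*t)) + 6*H*Real.exp (-((1-H)*t))
      - (6*H-2)*Real.exp (-((2-H)*t)) + (2*H-1)*Real.exp (-((3-H)*t))
      ≤ (2+4*H) * Real.exp (-(H*(1-H)/6*t)) := by
  have ht0 : (0:ℝ) ≤ t := by linarith
  set c : ℝ := H*(1-H)/6 with hc
  have hc0 : 0 ≤ c := by nlinarith
  have hc24 : c ≤ 1/24 := by nlinarith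
  have hc16 : c ≤ (1-H)/6 := by nlinarith
  -- drop the last two extreme terms
  have drop1 : (2*H-1)*Real.exp (-((3-H)*t)) ≤ Real.exp (-((1+H)*t)) := by
    have h1 : Real.exp (-((3-H)*t)) ≤ Real.exp (-((1+H)*t)) := by
      apply Real.exp_le_exp.2; nlinarith
    have h2 : (0:ℝ) < Real.exp (-((3-H)*t)) := Real.exp_pos _
    nlinarith
  set A : ℝ := Real.exp (-((H-c)*t)) with hA
  set S : ℝ := Real.exp (-((1-H-c)*t)) with hS
  set U : ℝ := Real.exp (-((2-H-c)*t)) with hU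
  set G : ℝ := Real.exp (-(11*t/24)) with hG
  have hApos : 0 < A := Real.exp_pos _
  have hSpos : 0 < S := Real.exp_pos _
  have hUpos : 0 < U := Real.exp_pos _
  have hGpos : 0 < G := Real.exp_pos _
  have hEc : (0:ℝ) < Real.exp (-(c*t)) := Real.exp_pos _
  have ea1 : Real.exp (-(H*t)) = A * Real.exp (-(c*t)) := by
    rw [hA, ← Real.exp_add]; ring_nf
  have ea3 : Real.exp (-((1-H)*t)) = S * Real.exp (-(c*t)) := by
    rw [hS, ← Real.exp_add]; ring_nf
  have ea4 : Real.exp (-((2-H)*t)) = U * Real.exp (-(c*t)) := by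
    rw [hU, ← Real.exp_add]; ring_nf
  -- core inequality
  have hAG : A ≤ G := by
    rw [hA, hG]; apply Real.exp_le_exp.2; nlinarith
  have hGS : G ≤ S := by
    rw [hS, hG]; apply Real.exp_le_exp.2
    nlinarith [mul_nonneg (by linarith : (0:ℝ) ≤ H - 1/2) (by linarith : (0:ℝ) ≤ 13/2 - H),
      mul_nonneg (mul_nonneg (by linarith : (0:ℝ) ≤ H - 1/2) (by linarith : (0:ℝ) ≤ 13/2 - H)) ht0]
  have hS1 : S ≤ 1 := by
    rw [hS]; apply Real.exp_le_one_iff.2; nlinarith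
  have h55 : G * ((11/2)*t) ≤ 1 := by
    have h1 := exp_1124 ht
    have h2 : G * Real.exp (11*t/24) = 1 := by
      rw [hG, ← Real.exp_add]; simp
    calc G * ((11/2)*t) ≤ G * Real.exp (11*t/24) :=
          mul_le_mul_of_nonneg_left h1 hGpos.le
      _ = 1 := h2
  have h4G : 4*G ≤ 1 := by
    have h1 : G * 55 ≤ G * Real.exp (110/24) := mul_le_mul_of_nonneg_left exp_ge_55 hGpos.le
    have h2 : G * Real.exp (110/24) = Real.exp (-(11*t/24) + 110/24) := by
      rw [hG, ← Real.exp_add]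
    have h3 : Real.exp (-(11*t/24) + 110/24) ≤ 1 := Real.exp_le_one_iff.2 (by linarith)
    nlinarith
  have hS1x : S * (1 + (1-H-c)*t) ≤ 1 := by
    have h2 : 1 + (1-H-c)*t ≤ Real.exp ((1-H-c)*t) := by
      have := Real.add_one_le_exp ((1-H-c)*t); linarith
    have h3 : S * Real.exp ((1-H-c)*t) = 1 := by rw [hS, ← Real.exp_add]; simp
    calc S * (1 + (1-H-c)*t) ≤ S * Real.exp ((1-H-c)*t) :=
          mul_le_mul_of_nonneg_left h2 hSpos.le
      _ = 1 := h3
  have core : 2*(1+H)*A + 6*H*S - (6*H-2)*U ≤ 2+4*H := by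
    -- mid step
    have hUA : U = A * Real.exp (-((2-2*H)*t)) := by
      rw [hU, hA, ← Real.exp_add]; ring_nf
    have w1 : 1-(2-2*H)*t ≤ Real.exp (-((2-2*H)*t)) := by
      have := Real.add_one_le_exp (-((2-2*H)*t)); linarith
    have h62 : (0:ℝ) ≤ 6*H-2 := by linarith
    have mstep : (6*H-2)*A*(1-(2-2*H)*t) ≤ (6*H-2)*U := by
      rw [hUA]
      have := mul_le_mul_of_nonneg_left w1 (mul_nonneg h62 hApos.le)
      calc (6*H-2)*A*(1-(2-2*H)*t) = (6*H-2)*A*(1-(2-2*H)*t) := rfl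
        _ ≤ (6*H-2)*A*Real.exp (-((2-2*H)*t)) := by
            have h := mul_le_mul_of_nonneg_left w1 (mul_nonneg h62 hApos.le)
            calc (6*H-2)*A*(1-(2-2*H)*t) = ((6*H-2)*A)*(1-(2-2*H)*t) := by ring
              _ ≤ ((6*H-2)*A)*Real.exp (-((2-2*H)*t)) := h
              _ = (6*H-2)*A*Real.exp (-((2-2*H)*t)) := by ring
        _ = (6*H-2)*(A*Real.exp (-((2-2*H)*t))) := by ring
    have w2 : (6*H-2)*(2-2*H)*(t*A) ≤ 8*(1-H)*(t*A) :=
      mul_le_mul_of_nonneg_right w2aux (mul_nonneg ht0 hApos.le)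
    have mid : 2*(1+H)*A + 6*H*S - (6*H-2)*U
        ≤ (4-4*H)*A + 8*(1-H)*t*A + 6*H*S := by linarith [mstep, w2]
    -- n1
    have n1 : (4-4*H)*A ≤ 1-H := by
      have h1 : (4-4*H)*A ≤ (4-4*H)*G := mul_le_mul_of_nonneg_left hAG (by linarith)
      have h2 : (1-H)*(4*G) ≤ (1-H)*1 := mul_le_mul_of_nonneg_left h4G (by linarith)
      linarith [h1, h2]
    -- j3
    have hj3' : 8*t*A ≤ 1 + (5/2)*t*S := by
      have h1 : 8*t*A ≤ 8*t*G := mul_le_mul_of_nonneg_left hAG (by linarith)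
      have h2 : (5/2)*t*G ≤ (5/2)*t*S := mul_le_mul_of_nonneg_left hGS (by linarith)
      linarith [h55]
    have j3 : 8*(1-H)*t*A ≤ (1-H) + (5/2)*(1-H)*t*S := by
      have := mul_le_mul_of_nonneg_left hj3' (by linarith : (0:ℝ) ≤ 1-H)
      linarith [this]
    -- j2
    have j2 : (5/2)*(1-H)*t*S ≤ 6*H*(1-S) := by
      have hx : (1-H-c)*t*S ≤ 1 - S := by linarith [hS1x]
      have hxb : (5/6)*(1-H)*t*S ≤ (1-H-c)*t*S := by
        apply mul_le_mul_of_nonneg_right _ hSpos.le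
        apply mul_le_mul_of_nonneg_right _ ht0
        linarith
      have h3S : 3*(1-S) ≤ 6*H*(1-S) := by
        have := mul_nonneg (by linarith : (0:ℝ) ≤ 6*H-3) (by linarith : (0:ℝ) ≤ 1-S)
        linarith [this]
      linarith [hxb, hx, h3S]
    linarith [mid, n1, j3, j2]
  -- assemble
  calc 2*(1+H)*Real.exp (-(H*t)) - Real.exp (-((1+H)*t)) + 6*H*Real.exp (-((1-H)*t))
      - (6*H-2)*Real.exp (-((2-H)*t)) + (2*H-1)*Real.exp (-((3-H)*t))
      ≤ 2*(1+H)*Real.exp (-(H*t)) + 6*H*Real.exp (-((1-H)*t))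
        - (6*H-2)*Real.exp (-((2-H)*t)) := by linarith [drop1]
    _ = (2*(1+H)*A + 6*H*S - (6*H-2)*U) * Real.exp (-(c*t)) := by
        rw [ea1, ea3, ea4]; ring
    _ ≤ (2+4*H) * Real.exp (-(c*t)) := mul_le_mul_of_nonneg_right core hEc.le

lemma one_sub_exp_ge {t : ℝ} (ht : 0 ≤ t) (h10 : t ≤ 10) : t/12 ≤ 1 - Real.exp (-t) := by
  have h1 : 1 + t ≤ Real.exp t := by have := Real.add_one_le_exp t; linarith
  have h2 : Real.exp (-t) * Real.exp t = 1 := by rw [← Real.exp_add]; simp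
  have h3 : (0:ℝ) < Real.exp (-t) := Real.exp_pos _
  nlinarith [mul_le_mul_of_nonneg_left h1 h3.le, mul_nonneg (mul_nonneg h3.le ht) (by linarith : (0:ℝ) ≤ 11 - t)]

end Auxiliary

/-- estimate (19) of Lemma 2: there exists `ρ ∈ (0,1)` such that
`B_H(t) ≤ 1/cosh(ρ H (1−H) t)` for every `H ∈ (0,1)` and every `t ≥ 0`. -/
theorem statement4 :
    ∃ ρ : ℝ, ρ ∈ Set.Ioo (0:ℝ) 1 ∧
      ∀ H : ℝ, H ∈ Set.Ioo (0:ℝ) 1 → ∀ t : ℝ, 0 ≤ t →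
        BH H t ≤ 1 / Real.cosh (ρ * H * (1 - H) * t) := by
  refine ⟨1/6, ⟨by norm_num, by norm_num⟩, ?_⟩
  rintro H ⟨hH0, hH1⟩ t ht
  have hu0 : (0:ℝ) < Real.exp (-t) := Real.exp_pos _
  have hu1 : Real.exp (-t) ≤ 1 := Real.exp_le_one_iff.2 (by linarith)
  have hden : (0:ℝ) < 2+4*H := by linarith
  have hx0 : 0 ≤ 1/6 * H * (1-H) * t :=
    mul_nonneg (mul_nonneg (mul_nonneg (by norm_num) hH0.le) (by linarith)) ht
  rw [BH_eq ht hH0.le]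
  rcases le_total t 10 with h10 | h10
  · -- small times: quadratic bound
    have L1 := lem1 hH0 hH1 hu0 hu1
    have hBH : (2*(1+H)*((Real.exp (-t))^H + (Real.exp (-t))^(-H))
        - ((Real.exp (-t))^(1+H) + (Real.exp (-t))^(-(1+H)))
        + (Real.exp (-t))^(-(1+H)) * (1 - Real.exp (-t))^(2*H+2)) / (2+4*H)
        ≤ 1 - (H*(1-H)/2)*(1-Real.exp (-t))^2 := by
      rw [div_le_iff₀ hden]
      nlinarith [L1]
    have hv := one_sub_exp_ge ht h10
    have hxv : (1/6 * H * (1-H) * t)^2 ≤ H*(1-H)*(1-Real.exp (-t))^2 := by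
      have ha : (0:ℝ) ≤ H*(1-H) := mul_nonneg hH0.le (by linarith)
      have m1 : (H*(1-H))*(H*(1-H)) ≤ (H*(1-H))*(1/4) := by
        nlinarith [sq_nonneg (1/2 - H)]
      have m2 : (t/12)^2 ≤ (1-Real.exp (-t))^2 := by
        have h0 : (0:ℝ) ≤ t/12 := by linarith
        nlinarith [hv]
      have m3 := mul_le_mul_of_nonneg_left m2 ha
      nlinarith [mul_le_mul_of_nonneg_right m1 (sq_nonneg t)]
    have hq := sech_ge_quad hx0
    calc (2*(1+H)*((Real.exp (-t))^H + (Real.exp (-t))^(-H))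
        - ((Real.exp (-t))^(1+H) + (Real.exp (-t))^(-(1+H)))
        + (Real.exp (-t))^(-(1+H)) * (1 - Real.exp (-t))^(2*H+2)) / (2+4*H)
        ≤ 1 - (H*(1-H)/2)*(1-Real.exp (-t))^2 := hBH
      _ ≤ 1 - (1/6 * H * (1-H) * t)^2/2 := by nlinarith [hxv]
      _ ≤ 1 / Real.cosh (1/6 * H * (1-H) * t) := hq
  · -- large times: exponential bound
    have hpw : ∀ a : ℝ, (Real.exp (-t))^a = Real.exp (-(a*t)) := by
      intro a; rw [exp_rpow']; congr 1; ring
    have hEc : Real.exp (-(H*(1-H)/6*t)) = Real.exp (-(1/6 * H * (1-H) * t)) := by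
      congr 1; ring
    have hend : Real.exp (-(1/6 * H * (1-H) * t))
        ≤ 1 / Real.cosh (1/6 * H * (1-H) * t) := sech_ge_exp hx0
    have last : (2+4*H) * Real.exp (-(H*(1-H)/6*t))
        ≤ 1 / Real.cosh (1/6 * H * (1-H) * t) * (2+4*H) := by
      rw [hEc]
      linarith [mul_le_mul_of_nonneg_left hend hden.le]
    rw [div_le_iff₀ hden]
    simp only [hpw]
    rcases le_total H (1/2) with hc | hc
    · have key := fA_bound hH0 hc hu0 hu1
      have tail := lem2A hH0 hc h10
      simp only [hpw] at key
      linarith [le_trans key tail, last]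
    · have key := fB_bound hc hH1 hu0 hu1
      have tail := lem2B hc hH1 h10
      simp only [hpw] at key
      linarith [le_trans key tail, last]
end

section
/- For every H ∈ (0,1) and every t ≥ 0, one has 1 − B_H(t) ≥ (1+H)(2+4H)^{−1} · ∫_{e^{−t}}^{1} R_H(u) du, where B_H(t) = [2(1+H)(e^{Ht} + e^{−Ht}) − (e^{(1+H)t} + e^{−(1+H)t}) + (e^{t/2} − e^{−t/2})^{2H+2}]/(2+4H) and R_H(x) = 1 − 2Hx − (1−x)^{2H}(1−x²) + 2Hx^{2H+1} − x^{2+2H}. -/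
/-- The function `R_H` of formula (21). -/
noncomputable def RH (H x : ℝ) : ℝ :=
  1 - 2*H*x - (1-x) ^ (2*H) * (1 - x^2) + 2*H*x ^ (2*H+1) - x ^ (2+2*H)

lemma rpow_cont {c : ℝ} (hc : 0 ≤ c) : Continuous fun x : ℝ => x ^ c := by
  rw [continuous_iff_continuousAt]
  exact fun x => Real.continuousAt_rpow_const x c (Or.inr hc)

lemma RH_cont (H : ℝ) (hH : 0 < H) : Continuous (RH H) := by
  have h1 : Continuous fun x : ℝ => (1 - x) ^ (2*H : ℝ) :=
    (rpow_cont (by linarith)).comp (continuous_const.sub continuous_id)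
  have h2 : Continuous fun x : ℝ => x ^ (2*H+1 : ℝ) := rpow_cont (by linarith)
  have h3 : Continuous fun x : ℝ => x ^ (2+2*H : ℝ) := rpow_cont (by linarith)
  exact ((((continuous_const.sub (continuous_const.mul continuous_id)).sub
      (h1.mul (continuous_const.sub (continuous_pow 2)))).add
      (continuous_const.mul h2)).sub h3)

lemma RH_nonneg (H x : ℝ) (hH : H ∈ Set.Ioo (0:ℝ) 1) (hx : x ∈ Set.Icc (0:ℝ) 1) :
    0 ≤ RH H x := by
  obtain ⟨hH0, hH1⟩ := hH
  obtain ⟨hx0, hx1⟩ := hx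
  rcases eq_or_lt_of_le hx0 with h0 | hx0
  · rw [← h0]
    norm_num [RH, Real.zero_rpow (show (2*H+1:ℝ) ≠ 0 by positivity),
      Real.zero_rpow (show (2+2*H:ℝ) ≠ 0 by positivity)]
  rcases eq_or_lt_of_le hx1 with h1 | hx1
  · rw [h1]
    norm_num [RH, Real.one_rpow]
  have hxne : x ≠ 0 := ne_of_gt hx0
  have e1 : x ^ (2*H+1:ℝ) = x ^ (2*H:ℝ) * x := Real.rpow_add_one hxne _
  rcases le_or_gt H (1/2) with hhalf | hhalf
  · have e2 : x ^ (2+2*H:ℝ) = x ^ (2*H:ℝ) * x * x := by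
      rw [show (2+2*H:ℝ) = (2*H+1)+1 by ring, Real.rpow_add_one hxne,
        Real.rpow_add_one hxne]
    have hv : (1-x) ^ (2*H:ℝ) ≤ 1 - 2*H*x := by
      have := rpow_one_add_le_one_add_mul_self (s := -x) (by linarith)
        (show (0:ℝ) ≤ 2*H by linarith) (by linarith)
      calc (1-x) ^ (2*H:ℝ) = (1 + -x) ^ (2*H:ℝ) := by ring_nf
        _ ≤ 1 + 2*H * -x := this
        _ = 1 - 2*H*x := by ring
    have hu1 : x ^ (2*H:ℝ) ≤ 1 := Real.rpow_le_one hx0.le hx1.le (by linarith)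
    have hux : x ≤ x ^ (2*H:ℝ) := by
      have := Real.rpow_le_rpow_of_exponent_ge hx0 hx1.le (show 2*H ≤ 1 by linarith)
      rwa [Real.rpow_one] at this
    unfold RH
    rw [e1, e2]
    rcases le_total x (2*H) with hc | hc
    · have h1 : 0 ≤ x*(2*H-x)*(x ^ (2*H:ℝ) - x) :=
        mul_nonneg (mul_nonneg hx0.le (by linarith)) (by linarith)
      have h2 : 0 ≤ (1-x^2)*((1-2*H*x) - (1-x) ^ (2*H:ℝ)) :=
        mul_nonneg (by nlinarith) (by linarith)
      nlinarith [mul_nonneg (mul_nonneg hx0.le hx0.le) (show (0:ℝ) ≤ 1-x by linarith)]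
    · have h1 : 0 ≤ x*(x-2*H)*(1 - x ^ (2*H:ℝ)) :=
        mul_nonneg (mul_nonneg hx0.le (by linarith)) (by linarith)
      have h2 : 0 ≤ (1-x^2)*((1-2*H*x) - (1-x) ^ (2*H:ℝ)) :=
        mul_nonneg (by nlinarith) (by linarith)
      nlinarith [mul_nonneg hx0.le (show (0:ℝ) ≤ 1-x^2 by nlinarith)]
  · have h1xne : (1-x) ≠ 0 := by intro h; linarith [h]
    have e1' : x ^ (2*H+1:ℝ) = x ^ (2*H-1:ℝ) * x * x := by
      rw [show (2*H+1:ℝ) = ((2*H-1)+1)+1 by ring, Real.rpow_add_one hxne,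
        Real.rpow_add_one hxne]
    have e2' : x ^ (2+2*H:ℝ) = x ^ (2*H-1:ℝ) * x * x * x := by
      rw [show (2+2*H:ℝ) = (((2*H-1)+1)+1)+1 by ring, Real.rpow_add_one hxne,
        Real.rpow_add_one hxne, Real.rpow_add_one hxne]
    have e4 : (1-x) ^ (2*H:ℝ) = (1-x) ^ (2*H-1:ℝ) * (1-x) := by
      nth_rewrite 1 [show (2*H:ℝ) = (2*H-1)+1 by ring]
      rw [Real.rpow_add_one h1xne]
    have hv : (1-x) ^ (2*H-1:ℝ) ≤ 1 - (2*H-1)*x := by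
      have := rpow_one_add_le_one_add_mul_self (s := -x) (by linarith)
        (show (0:ℝ) ≤ 2*H-1 by linarith) (by linarith)
      calc (1-x) ^ (2*H-1:ℝ) = (1 + -x) ^ (2*H-1:ℝ) := by ring_nf
        _ ≤ 1 + (2*H-1) * -x := this
        _ = 1 - (2*H-1)*x := by ring
    have hux : x ≤ x ^ (2*H-1:ℝ) := by
      have := Real.rpow_le_rpow_of_exponent_ge hx0 hx1.le (show 2*H-1 ≤ 1 by linarith)
      rwa [Real.rpow_one] at this
    unfold RH
    rw [e1', e2', e4]
    have h1 : 0 ≤ x^2*(2*H-x)*(x ^ (2*H-1:ℝ) - x) :=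
      mul_nonneg (mul_nonneg (by positivity) (by linarith)) (by linarith)
    have h2 : 0 ≤ (1-x)*(1-x^2)*((1 - (2*H-1)*x) - (1-x) ^ (2*H-1:ℝ)) :=
      mul_nonneg (mul_nonneg (by linarith) (by nlinarith)) (by linarith)
    nlinarith [mul_nonneg (mul_nonneg (mul_nonneg hx0.le hx0.le)
      (show (0:ℝ) ≤ 1-x^2 by nlinarith)) (show (0:ℝ) ≤ 2-2*H by linarith)]

lemma keyId (H s : ℝ) (hH0 : 0 < H) (hs : 0 ≤ s) :
    2*(1+H)*(H*Real.exp (H*s) - H*Real.exp (-H*s))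
      - ((1+H)*Real.exp ((1+H)*s) - (1+H)*Real.exp (-(1+H)*s))
      + (2*H+2)*(Real.exp (s/2) - Real.exp (-s/2)) ^ (2*H+1:ℝ)
          * ((Real.exp (s/2) + Real.exp (-s/2))/2)
    = -((1+H) * (Real.exp ((1+H)*s) * RH H (Real.exp (-s)))) := by
  rcases eq_or_lt_of_le hs with h0 | hs
  · rw [← h0]
    norm_num [RH, Real.exp_zero, Real.one_rpow,
      Real.zero_rpow (show (2*H+1:ℝ) ≠ 0 by positivity)]
  have hE1 : Real.exp (-s) < 1 := by
    rw [Real.exp_lt_one_iff]; linarith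
  have hE0 : (0:ℝ) < Real.exp (-s) := Real.exp_pos _
  have hsplit : Real.exp (s/2) - Real.exp (-s/2) = Real.exp (s/2) * (1 - Real.exp (-s)) := by
    rw [mul_sub, mul_one, ← Real.exp_add, show s/2 + -s = -s/2 by ring]
  have g1 : (Real.exp (s/2) - Real.exp (-s/2)) ^ (2*H+1:ℝ)
      = (Real.exp (H*s) * Real.exp (s/2)) * ((1 - Real.exp (-s)) ^ (2*H:ℝ) * (1 - Real.exp (-s))) := by
    rw [hsplit, Real.mul_rpow (Real.exp_pos _).le (by linarith),
      ← Real.exp_mul, show s/2*(2*H+1) = H*s + s/2 by ring, Real.exp_add,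
      Real.rpow_add_one (by linarith : (1:ℝ) - Real.exp (-s) ≠ 0)]
  have g2 : Real.exp (-s) ^ (2*H+1:ℝ)
      = (Real.exp (H*s) * Real.exp (H*s) * (Real.exp (s/2) * Real.exp (s/2)))⁻¹ := by
    rw [← Real.exp_mul, show -s*(2*H+1) = -(H*s + H*s + (s/2 + s/2)) by ring, Real.exp_neg,
      Real.exp_add, Real.exp_add, Real.exp_add]
  have g3 : Real.exp (-s) ^ (2+2*H:ℝ)
      = ((Real.exp (s/2) * Real.exp (s/2)) * (Real.exp (s/2) * Real.exp (s/2))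
          * (Real.exp (H*s) * Real.exp (H*s)))⁻¹ := by
    rw [← Real.exp_mul, show -s*(2+2*H) = -((s/2+s/2) + (s/2+s/2) + (H*s + H*s)) by ring,
      Real.exp_neg, Real.exp_add, Real.exp_add, Real.exp_add, Real.exp_add]
  have f1 : Real.exp (-s/2) = (Real.exp (s/2))⁻¹ := by
    rw [← Real.exp_neg, show -(s/2) = -s/2 by ring]
  have f2 : Real.exp (-s) = (Real.exp (s/2) * Real.exp (s/2))⁻¹ := by
    rw [← Real.exp_add, ← Real.exp_neg, show -(s/2+s/2) = -s by ring]
  have f3 : Real.exp (-H*s) = (Real.exp (H*s))⁻¹ := by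
    rw [← Real.exp_neg, show -(H*s) = -H*s by ring]
  have f4 : Real.exp ((1+H)*s) = Real.exp (s/2) * Real.exp (s/2) * Real.exp (H*s) := by
    rw [← Real.exp_add, ← Real.exp_add, show s/2 + s/2 + H*s = (1+H)*s by ring]
  have f5 : Real.exp (-(1+H)*s) = (Real.exp (s/2) * Real.exp (s/2) * Real.exp (H*s))⁻¹ := by
    rw [← Real.exp_add, ← Real.exp_add, ← Real.exp_neg,
      show -(s/2 + s/2 + H*s) = -(1+H)*s by ring]
  unfold RH
  rw [g1, g2, g3, f2, f1, f3, f4, f5]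
  set P := Real.exp (s/2) with hPdef
  set Y := Real.exp (H*s) with hYdef
  have hP : (0:ℝ) < P := Real.exp_pos _
  have hY : (0:ℝ) < Y := Real.exp_pos _
  set v := (1 - (P*P)⁻¹) ^ (2*H:ℝ) with hv
  field_simp
  ring

lemma BH_deriv (H : ℝ) (hH0 : 0 < H) {s : ℝ} (hs : 0 ≤ s) :
    HasDerivAt (BH H)
      (-((1+H) * (Real.exp ((1+H)*s) * RH H (Real.exp (-s))) / (2+4*H))) s := by
  have hd1 : HasDerivAt (fun u : ℝ => Real.exp (H*u)) (Real.exp (H*s) * (H*1)) s :=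
    ((hasDerivAt_id s).const_mul H).exp
  have hd2 : HasDerivAt (fun u : ℝ => Real.exp (-H*u)) (Real.exp (-H*s) * (-H*1)) s :=
    ((hasDerivAt_id s).const_mul (-H)).exp
  have hd3 : HasDerivAt (fun u : ℝ => Real.exp ((1+H)*u)) (Real.exp ((1+H)*s) * ((1+H)*1)) s :=
    ((hasDerivAt_id s).const_mul (1+H)).exp
  have hd4 : HasDerivAt (fun u : ℝ => Real.exp (-(1+H)*u)) (Real.exp (-(1+H)*s) * (-(1+H)*1)) s :=
    ((hasDerivAt_id s).const_mul (-(1+H))).exp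
  have hg : HasDerivAt (fun u : ℝ => Real.exp (u/2) - Real.exp (-u/2))
      (Real.exp (s/2) * (1/2) - Real.exp (-s/2) * (-1/2)) s := by
    have ha : HasDerivAt (fun u : ℝ => Real.exp (u/2)) (Real.exp (s/2) * (1/2)) s :=
      ((hasDerivAt_id s).div_const 2).exp
    have hb : HasDerivAt (fun u : ℝ => Real.exp (-u/2)) (Real.exp (-s/2) * (-1/2)) s := by
      have := (((hasDerivAt_id s).neg).div_const 2).exp
      convert this using 2 <;> norm_num
    exact ha.sub hb
  have hout := Real.hasDerivAt_rpow_const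
    (x := Real.exp (s/2) - Real.exp (-s/2)) (p := 2*H+2) (Or.inr (by linarith))
  have hrp := hout.comp s hg
  have hnum := (((hd1.add hd2).const_mul (2*(1+H))).sub (hd3.add hd4)).add hrp
  have hfull := hnum.div_const (2+4*H)
  have hBHeq : BH H = fun u : ℝ =>
      (2*(1+H)*(Real.exp (H*u) + Real.exp (-H*u))
        - (Real.exp ((1+H)*u) + Real.exp (-(1+H)*u))
        + (Real.exp (u/2) - Real.exp (-u/2)) ^ (2*H+2)) / (2+4*H) := rfl
  rw [hBHeq]
  refine hfull.congr_deriv (Eq.symm ?_)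
  rw [show (2*H+2-1:ℝ) = 2*H+1 by ring]
  linear_combination -(keyId H s hH0 hs) / (2+4*H)

/-- inequality (25): for `H ∈ (0,1)` and `t ≥ 0`,
`1 − B_H(t) ≥ (1+H)(2+4H)⁻¹ ∫_{e^{−t}}^1 R_H(u) du`. -/
theorem statement9 (H t : ℝ) (hH : H ∈ Set.Ioo (0:ℝ) 1) (ht : 0 ≤ t) :
    (1+H) * (2+4*H)⁻¹ * (∫ u in (Real.exp (-t))..1, RH H u) ≤ 1 - BH H t := by
  obtain ⟨hH0, hH1⟩ := hH
  have hRcont : Continuous (RH H) := RH_cont H hH0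
  have hc : (0:ℝ) < 2 + 4*H := by linarith
  have hsub : ∫ u in (Real.exp (-t))..1, RH H u
      = ∫ s in (0:ℝ)..t, Real.exp (-s) * RH H (Real.exp (-s)) := by
    have h := intervalIntegral.integral_comp_smul_deriv (a := 0) (b := t)
      (f := fun s : ℝ => Real.exp (-s)) (f' := fun s : ℝ => -Real.exp (-s)) (g := RH H)
      (fun x _ => by
        have h1 : HasDerivAt (fun s : ℝ => Real.exp (-s)) (Real.exp (-x) * (-1)) x :=
          ((hasDerivAt_id x).neg).exp
        simpa using h1)
      (Real.continuous_exp.comp continuous_neg).neg.continuousOn hRcont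
    simp only [Function.comp, smul_eq_mul, neg_zero, Real.exp_zero, neg_mul] at h
    rw [intervalIntegral.integral_neg] at h
    rw [intervalIntegral.integral_symm (Real.exp (-t)) 1] at h
    linarith [h]
  have hBH0 : BH H 0 = 1 := by
    have : ((0:ℝ)/2) = 0 := by norm_num
    simp only [BH, mul_zero, neg_zero, Real.exp_zero, this, zero_div, sub_self]
    rw [Real.zero_rpow (by positivity : (2*H+2:ℝ) ≠ 0)]
    field_simp
    ring
  have hderiv : ∀ x ∈ Set.uIcc (0:ℝ) t,
      HasDerivAt (BH H)
        (-((1+H) * (Real.exp ((1+H)*x) * RH H (Real.exp (-x))) / (2+4*H))) x := by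
    intro x hx
    rw [Set.uIcc_of_le ht] at hx
    exact BH_deriv H hH0 hx.1
  have hContG : Continuous fun x : ℝ =>
      (1+H) * (Real.exp ((1+H)*x) * RH H (Real.exp (-x))) / (2+4*H) :=
    ((continuous_const.mul ((Real.continuous_exp.comp (continuous_const.mul continuous_id)).mul
      (hRcont.comp (Real.continuous_exp.comp continuous_neg)))).div_const _)
  have hFTC := intervalIntegral.integral_eq_sub_of_hasDerivAt hderiv
    (hContG.neg.intervalIntegrable 0 t)
  rw [intervalIntegral.integral_neg, hBH0] at hFTC
  have hmain : ∫ s in (0:ℝ)..t, (1+H) * (2+4*H)⁻¹ * (Real.exp (-s) * RH H (Real.exp (-s)))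
      ≤ ∫ s in (0:ℝ)..t, (1+H) * (Real.exp ((1+H)*s) * RH H (Real.exp (-s))) / (2+4*H) := by
    apply intervalIntegral.integral_mono_on ht
    · exact ((continuous_const.mul ((Real.continuous_exp.comp continuous_neg).mul
        (hRcont.comp (Real.continuous_exp.comp continuous_neg)))).intervalIntegrable 0 t)
    · exact hContG.intervalIntegrable 0 t
    · intro x hx
      have hr : 0 ≤ RH H (Real.exp (-x)) := by
        apply RH_nonneg H _ ⟨hH0, hH1⟩
        constructor
        · exact (Real.exp_pos _).le
        · exact Real.exp_le_one_iff.mpr (by linarith [hx.1])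
      have hexp : Real.exp (-x) ≤ Real.exp ((1+H)*x) :=
        Real.exp_le_exp.mpr (by nlinarith [hx.1])
      calc (1+H) * (2+4*H)⁻¹ * (Real.exp (-x) * RH H (Real.exp (-x)))
          ≤ (1+H) * (2+4*H)⁻¹ * (Real.exp ((1+H)*x) * RH H (Real.exp (-x))) := by
            apply mul_le_mul_of_nonneg_left (mul_le_mul_of_nonneg_right hexp hr)
            positivity
        _ = (1+H) * (Real.exp ((1+H)*x) * RH H (Real.exp (-x))) / (2+4*H) := by
            rw [div_eq_mul_inv]; ring
  rw [hsub, ← intervalIntegral.integral_const_mul]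
  linarith [hmain, hFTC]
end
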